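/- Let E be a Riesz space and let p, q : ℕ → ℕ satisfy the deferred property. If (x_n) is a decreasing sequence in E (x_1 ≥ x_2 ≥ ⋯) and x_n →^{D_{st_o}}_{p,q} x, then x_n ↓ x, i.e., inf_{n∈ℕ} x_n = x; in particular (x_n) order converges to x. -/

import Mathlib

open Filter Topology

variable {E : Type*} [AddCommGroup E] [Lattice E]
  [CovariantClass E E (· + ·) (· ≤ ·)] [Module ℝ E] [PosSMulMono ℝ E]

/-- `p` and `q` satisfy the deferred property: `p n < q n` for all `n` and `q n → ∞`. -/
def DeferredProperty (p q : ℕ → ℕ) : Prop :=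
  (∀ n, p n < q n) ∧ Tendsto q atTop atTop

open Classical in
/-- The ratio `|{k ∈ K : p n < k ≤ q n}| / (q n - p n)`. -/
noncomputable def deferredRatio (p q : ℕ → ℕ) (K : Set ℕ) (n : ℕ) : ℝ :=
  (((Finset.Ioc (p n) (q n)).filter (fun k => k ∈ K)).card : ℝ) / ((q n : ℝ) - (p n : ℝ))

/-- The deferred density of `K ⊆ ℕ` is `a`. -/
def DeferredDensity (p q : ℕ → ℕ) (K : Set ℕ) (a : ℝ) : Prop :=
  Tendsto (deferredRatio p q K) atTop (nhds a)

/-- `z` is deferred statistical order decreasing to `0`: there is an (infinite) set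
`K = {k₁ < k₂ < ⋯}` of deferred density one along which `z` is decreasing with infimum `0`. -/
def DStatDecreasing (p q : ℕ → ℕ) (z : ℕ → E) : Prop :=
  ∃ K : Set ℕ, K.Infinite ∧ DeferredDensity p q K 1 ∧
    (∀ i ∈ K, ∀ j ∈ K, i ≤ j → z j ≤ z i) ∧ IsGLB (z '' K) 0

/-- `x` is deferred statistical order convergent to `l`. -/
def DStatOrderConv (p q : ℕ → ℕ) (x : ℕ → E) (l : E) : Prop :=
  ∃ z : ℕ → E, DStatDecreasing p q z ∧
    ∃ K : Set ℕ, K.Infinite ∧ DeferredDensity p q K 1 ∧ ∀ k ∈ K, |x k - l| ≤ z k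

/-- `x` order converges to `l`. -/
def OrderConv (x : ℕ → E) (l : E) : Prop :=
  ∃ y : ℕ → E, (∀ m n, m ≤ n → y n ≤ y m) ∧ IsGLB (Set.range y) 0 ∧ ∀ n, |x n - l| ≤ y n

open Classical in
/-- A finite set has deferred density zero. -/
lemma finite_deferredRatio_zero (p q : ℕ → ℕ) (hpq : DeferredProperty p q)
    (K : Set ℕ) (hK : K.Finite) :
    Tendsto (deferredRatio p q K) atTop (nhds 0) := by
  obtain ⟨M, hM⟩ := hK.bddAbove
  have hq : Tendsto (fun n => (q n : ℝ) - ((M : ℝ) + 1)) atTop atTop :=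
    tendsto_atTop_add_const_right _ _ (tendsto_natCast_atTop_atTop.comp hpq.2)
  have hbnd : Tendsto (fun n => ((M : ℝ) + 1) / ((q n : ℝ) - ((M : ℝ) + 1))) atTop (nhds 0) :=
    Tendsto.div_atTop tendsto_const_nhds hq
  refine tendsto_of_tendsto_of_tendsto_of_le_of_le' tendsto_const_nhds hbnd ?_ ?_
  · filter_upwards with n
    have hd : (0 : ℝ) ≤ (q n : ℝ) - (p n : ℝ) := by
      have := hpq.1 n
      have : (p n : ℝ) ≤ (q n : ℝ) := by exact_mod_cast this.le
      linarith
    unfold deferredRatio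
    positivity
  · filter_upwards [hpq.2.eventually_gt_atTop (M + 1)] with n hn
    have hd2 : (0 : ℝ) < (q n : ℝ) - ((M : ℝ) + 1) := by
      have : ((M : ℝ) + 1) < (q n : ℝ) := by exact_mod_cast hn
      linarith
    unfold deferredRatio
    by_cases hpn : M < p n
    · have hempty : ((Finset.Ioc (p n) (q n)).filter (fun k => k ∈ K)) = ∅ := by
        apply Finset.filter_false_of_mem
        intro k hk hkK
        have h1 : k ≤ M := hM hkK
        have h2 := (Finset.mem_Ioc.1 hk).1
        omega
      rw [hempty]
      simp only [Finset.card_empty, Nat.cast_zero, zero_div]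
      positivity
    · push_neg at hpn
      have hcard : (((Finset.Ioc (p n) (q n)).filter (fun k => k ∈ K)).card : ℝ)
          ≤ (M : ℝ) + 1 := by
        have hsub : ((Finset.Ioc (p n) (q n)).filter (fun k => k ∈ K)) ⊆
            Finset.Ioc (p n) M := by
          intro k hk
          rw [Finset.mem_filter, Finset.mem_Ioc] at hk
          exact Finset.mem_Ioc.2 ⟨hk.1.1, hM hk.2⟩
        have h1 := Finset.card_le_card hsub
        have h2 : (Finset.Ioc (p n) M).card = M - p n := Nat.card_Ioc _ _
        have h3 : ((Finset.Ioc (p n) (q n)).filter (fun k => k ∈ K)).card ≤ M + 1 := by omega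
        exact_mod_cast h3
      refine div_le_div₀ (by positivity) hcard hd2 ?_
      have : (p n : ℝ) ≤ (M : ℝ) := by exact_mod_cast hpn
      linarith

open Classical in
/-- The intersection of two sets of deferred density one is infinite. -/
lemma inter_infinite_of_density_one (p q : ℕ → ℕ) (hpq : DeferredProperty p q)
    (K K' : Set ℕ) (hK : DeferredDensity p q K 1) (hK' : DeferredDensity p q K' 1) :
    (K ∩ K').Infinite := by
  by_contra h
  rw [Set.not_infinite] at h
  have h0 := finite_deferredRatio_zero p q hpq _ h
  have hge : ∀ n, deferredRatio p q K n + deferredRatio p q K' n - 1 ≤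
      deferredRatio p q (K ∩ K') n := by
    intro n
    have hdnat := hpq.1 n
    have hd : (0 : ℝ) < (q n : ℝ) - (p n : ℝ) := by
      have : (p n : ℝ) < (q n : ℝ) := by exact_mod_cast hdnat
      linarith
    unfold deferredRatio
    set s := Finset.Ioc (p n) (q n) with hs
    set A := s.filter (fun k => k ∈ K) with hA
    set B := s.filter (fun k => k ∈ K') with hB
    set C := @Finset.filter ℕ (fun k => k ∈ K ∩ K') (fun a => Classical.propDecidable _) s with hC
    have hinter : A ∩ B = C := by
      ext k
      simp only [hA, hB, hC, Finset.mem_inter, Finset.mem_filter, Set.mem_inter_iff]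
      tauto
    have hcard : A.card + B.card ≤ s.card + C.card := by
      have h1 : (A ∪ B).card + (A ∩ B).card = A.card + B.card :=
        Finset.card_union_add_card_inter A B
      have h2 : (A ∪ B).card ≤ s.card :=
        Finset.card_le_card (Finset.union_subset (Finset.filter_subset _ _)
          (Finset.filter_subset _ _))
      rw [← hinter]
      omega
    have hscard : (s.card : ℝ) = (q n : ℝ) - (p n : ℝ) := by
      rw [hs, Nat.card_Ioc, Nat.cast_sub hdnat.le]
    have hcardR : (A.card : ℝ) + (B.card : ℝ) ≤
        ((q n : ℝ) - (p n : ℝ)) + (C.card : ℝ) := by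
      rw [← hscard]
      exact_mod_cast hcard
    set d := (q n : ℝ) - (p n : ℝ) with hdd
    calc (A.card : ℝ) / d + (B.card : ℝ) / d - 1
        = ((A.card : ℝ) + (B.card : ℝ)) / d - 1 := by rw [← add_div]
      _ ≤ (d + (C.card : ℝ)) / d - 1 := by gcongr
      _ = (C.card : ℝ) / d := by
          rw [add_div, div_self hd.ne']; ring
  have hle := le_of_tendsto_of_tendsto' ((hK.add hK').sub tendsto_const_nhds) h0 hge
  norm_num at hle

theorem stmt12 (p q : ℕ → ℕ) (hpq : DeferredProperty p q) (x : ℕ → E) (a : E)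
    (hdec : ∀ m n, m ≤ n → x n ≤ x m) (hx : DStatOrderConv p q x a) :
    IsGLB (Set.range x) a ∧ OrderConv x a := by
  obtain ⟨z, ⟨K, hKinf, hKd, hKmono, hKglb⟩, K', hK'inf, hK'd, hbound⟩ := hx
  set J := K ∩ K' with hJ
  have hJinf : J.Infinite := inter_infinite_of_density_one p q hpq K K' hKd hK'd
  -- key: anything below a tail of z along J is ≤ 0
  have key : ∀ (n : ℕ) (b : E), (∀ j ∈ J, n ≤ j → b ≤ z j) → b ≤ 0 := by
    intro n b hb
    refine hKglb.2 ?_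
    rintro _ ⟨k, hk, rfl⟩
    obtain ⟨j, hjJ, hj⟩ := hJinf.exists_gt (max k n)
    have hjk : k ≤ j := le_of_lt (lt_of_le_of_lt (le_max_left _ _) hj)
    have hjn : n ≤ j := le_of_lt (lt_of_le_of_lt (le_max_right _ _) hj)
    exact (hb j hjJ hjn).trans (hKmono k hk j hjJ.1 hjk)
  have hglb : IsGLB (Set.range x) a := by
    constructor
    · rintro _ ⟨n, rfl⟩
      have h1 : a - x n ≤ 0 := by
        refine key n (a - x n) ?_
        intro j hjJ hnj
        have h2 : a - x j ≤ |x j - a| := by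
          rw [← neg_sub (x j) a]
          exact neg_le_abs _
        calc a - x n ≤ a - x j := sub_le_sub_left (hdec n j hnj) a
          _ ≤ |x j - a| := h2
          _ ≤ z j := hbound j hjJ.2
      exact sub_nonpos.1 h1
    · intro b hb
      have h1 : b - a ≤ 0 := by
        refine key 0 (b - a) ?_
        intro j hjJ _
        have h2 : b ≤ x j := hb ⟨j, rfl⟩
        calc b - a ≤ x j - a := sub_le_sub_right h2 a
          _ ≤ |x j - a| := le_abs_self _
          _ ≤ z j := hbound j hjJ.2
      exact sub_nonpos.1 h1
  refine ⟨hglb, fun n => x n - a, fun m n h => sub_le_sub_right (hdec m n h) a, ?_, ?_⟩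
  · constructor
    · rintro _ ⟨n, rfl⟩
      exact sub_nonneg.2 (hglb.1 ⟨n, rfl⟩)
    · intro b hb
      have h1 : b + a ≤ a := by
        refine hglb.2 ?_
        rintro _ ⟨n, rfl⟩
        have := hb ⟨n, rfl⟩
        calc b + a ≤ (x n - a) + a := add_le_add_left this a
          _ = x n := by abel
      exact add_le_iff_nonpos_left.1 h1
  · intro n
    rw [abs_of_nonneg (sub_nonneg.2 (hglb.1 ⟨n, rfl⟩))]
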